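/- Let m ≥ 1, let q : F_2^{2m} → F_2 be the quadratic function q(x) = ∑_{k<m} x_k x_{m+k}, and let e⁽⁰⁾ ∈ F_2^{2m} be the vector with e⁽⁰⁾_i = 1 iff i = 0 or i = m. Then for every c' ∈ F_2^{2m} with q(c') = 1 there exists an invertible F_2-linear map B on F_2^{2m} such that q(B x) + ⟨e⁽⁰⁾, B x⟩ = q(x) + ⟨c', x⟩ for all x ∈ F_2^{2m}. -/

import Mathlib

open Finset

/-- Inner product on `F_2^n`. -/
def dotp {n : ℕ} (x y : Fin n → ZMod 2) : ZMod 2 := ∑ i, x i * y i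

/-- Hamming weight of a Boolean function: the cardinality of its support. -/
def wt {n : ℕ} (f : (Fin n → ZMod 2) → ZMod 2) : ℕ :=
  (Finset.univ.filter fun x => f x = 1).card

/-- Walsh–Hadamard transform of a Boolean function. -/
def walsh {n : ℕ} (f : (Fin n → ZMod 2) → ZMod 2) (x : Fin n → ZMod 2) : ℤ :=
  ∑ y : Fin n → ZMod 2, (-1 : ℤ) ^ (f y + dotp x y).val

/-- A Boolean function on `F_2^(2m)` is bent if its Walsh–Hadamard transform has constant
absolute value `2^m`. -/
def IsBent {m : ℕ} (f : (Fin (2 * m) → ZMod 2) → ZMod 2) : Prop :=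
  ∀ x, |walsh f x| = 2 ^ m

/-- The dual of a bent function: `f̂ x = 0` if `W_f x = 2^m`, and `1` otherwise
(for bent `f` the other case is exactly `W_f x = -2^m`). -/
def dual {m : ℕ} (f : (Fin (2 * m) → ZMod 2) → ZMod 2) :
    (Fin (2 * m) → ZMod 2) → ZMod 2 :=
  fun x => if walsh f x = 2 ^ m then 0 else 1

/-- The weight class of a bent function on `F_2^(2m)`:
`0` if its weight is `2^(2m-1) - 2^(m-1)`, and `1` otherwise. -/
def wc {m : ℕ} (f : (Fin (2 * m) → ZMod 2) → ZMod 2) : ZMod 2 :=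
  if wt f = 2 ^ (2 * m - 1) - 2 ^ (m - 1) then 0 else 1

/-- The Cayley graph of a Boolean function: distinct `x`, `y` are adjacent iff `f (x+y) = 1`. -/
def cayley {n : ℕ} (f : (Fin n → ZMod 2) → ZMod 2) : SimpleGraph (Fin n → ZMod 2) where
  Adj x y := x ≠ y ∧ f (x + y) = 1
  symm := ⟨fun x y h => ⟨h.1.symm, by rw [add_comm]; exact h.2⟩⟩
  loopless := ⟨fun x h => h.1 rfl⟩

instance cayleyAdjDecidable {n : ℕ} (f : (Fin n → ZMod 2) → ZMod 2) :
    DecidableRel (cayley f).Adj :=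
  fun x y => inferInstanceAs (Decidable (x ≠ y ∧ f (x + y) = 1))

/-- The standard quadratic bent function `q x = ∑_{k<m} x_k x_{m+k}` on `F_2^(2m)`. -/
def quadq {m : ℕ} (x : Fin (2 * m) → ZMod 2) : ZMod 2 :=
  ∑ k : Fin m, x ⟨k.1, by have := k.isLt; omega⟩ * x ⟨m + k.1, by have := k.isLt; omega⟩


namespace Quad14
variable {m : ℕ}

abbrev U (m : ℕ) := Fin m → ZMod 2

def ee {m : ℕ} : U m := fun k => if (k : ℕ) = 0 then 1 else 0

lemma dotp_add_left (x y z : U m) : dotp (x + y) z = dotp x z + dotp y z := by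
  simp [dotp, add_mul, Finset.sum_add_distrib]

lemma dotp_add_right (x y z : U m) : dotp x (y + z) = dotp x y + dotp x z := by
  simp [dotp, mul_add, Finset.sum_add_distrib]

lemma dotp_smul_right (c : ZMod 2) (x y : U m) : dotp x (c • y) = c * dotp x y := by
  simp [dotp, Finset.mul_sum]; apply Finset.sum_congr rfl; intros; ring

lemma dotp_comm (x y : U m) : dotp x y = dotp y x := by
  simp [dotp, mul_comm]

lemma dotp_smul_left (c : ZMod 2) (x y : U m) : dotp (c • x) y = c * dotp x y := by
  rw [dotp_comm, dotp_smul_right, dotp_comm]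

lemma dotp_ee_apply (hm : 0 < m) (u : U m) : dotp ee u = u ⟨0, hm⟩ := by
  rw [dotp, Finset.sum_eq_single (⟨0, hm⟩ : Fin m)]
  · simp [ee]
  · intro b _ hb
    have : (b : ℕ) ≠ 0 := fun h => hb (Fin.ext h)
    simp [ee, this]
  · simp

lemma dotp_ee_ee (hm : 0 < m) : dotp (ee : U m) ee = 1 := by
  rw [dotp_ee_apply hm]; simp [ee]

noncomputable def dotL (w : U m) : U m →ₗ[ZMod 2] ZMod 2 where
  toFun v := dotp w v
  map_add' := dotp_add_right w
  map_smul' c v := by simp [dotp_smul_right]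

@[simp] lemma dotL_apply (w v : U m) : dotL w v = dotp w v := rfl

noncomputable def hA (w : U m) : U m →ₗ[ZMod 2] U m := LinearMap.id + (dotL ee).smulRight w
noncomputable def hB (w : U m) : U m →ₗ[ZMod 2] U m := LinearMap.id + (dotL w).smulRight ee

lemma hA_apply (w u : U m) : hA w u = u + dotp ee u • w := rfl
lemma hB_apply (w v : U m) : hB w v = v + dotp w v • ee := rfl

lemma smul_cancel (c : ZMod 2) (x y : U m) : x + c • y + c • y = x := by
  rw [add_assoc, ← add_smul]
  have : c + c = 0 := by fin_cases c <;> decide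
  rw [this, zero_smul, add_zero]

lemma hA_hA (w : U m) (hw : dotp ee w = 0) (u : U m) : hA w (hA w u) = u := by
  rw [hA_apply, hA_apply, dotp_add_right, dotp_smul_right, hw, mul_zero, add_zero,
    smul_cancel]

lemma hB_hB (w : U m) (hw : dotp ee w = 0) (v : U m) : hB w (hB w v) = v := by
  rw [hB_apply, hB_apply, dotp_add_right, dotp_smul_right, dotp_comm w ee, hw, mul_zero,
    add_zero, smul_cancel]

lemma hAB_dotp (w : U m) (hw : dotp ee w = 0) (u v : U m) :
    dotp (hA w u) (hB w v) = dotp u v := by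
  rw [hA_apply, hB_apply, dotp_add_left, dotp_add_right, dotp_add_right,
    dotp_smul_right, dotp_smul_right, dotp_smul_left, dotp_smul_left,
    dotp_comm u ee, dotp_comm w ee, hw]
  generalize dotp u v = A
  generalize dotp ee u = B
  generalize dotp w v = C
  fin_cases A <;> fin_cases B <;> fin_cases C <;> rfl

noncomputable def HW (w : U m) (hw : dotp ee w = 0) :
    (U m × U m) ≃ₗ[ZMod 2] U m × U m :=
  LinearEquiv.ofLinear ((hA w).prodMap (hB w)) ((hA w).prodMap (hB w))
    (by apply LinearMap.ext; intro p
        simp [LinearMap.prodMap_apply, hA_hA w hw, hB_hB w hw])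
    (by apply LinearMap.ext; intro p
        simp [LinearMap.prodMap_apply, hA_hA w hw, hB_hB w hw])

lemma HW_apply (w : U m) (hw : dotp ee w = 0) (p : U m × U m) :
    HW w hw p = (hA w p.1, hB w p.2) := rfl

noncomputable def gmap (w : U m) : (U m × U m) →ₗ[ZMod 2] U m × U m where
  toFun p := (p.1, p.2 + dotp ee p.1 • w + dotp w p.1 • ee)
  map_add' p q := by
    ext i
    · rfl
    · simp only [Prod.fst_add, Prod.snd_add, dotp_add_right, add_smul, Pi.add_apply,
        Pi.smul_apply, smul_eq_mul]
      ring
  map_smul' c p := by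
    ext i
    · rfl
    · simp only [Prod.smul_fst, Prod.smul_snd, dotp_smul_right, RingHom.id_apply,
        Pi.add_apply, Pi.smul_apply, smul_eq_mul]
      ring

lemma gmap_apply (w : U m) (p : U m × U m) :
    gmap w p = (p.1, p.2 + dotp ee p.1 • w + dotp w p.1 • ee) := rfl

lemma gmap_gmap (w : U m) (p : U m × U m) : gmap w (gmap w p) = p := by
  rw [gmap_apply, gmap_apply]
  ext i
  · rfl
  · simp only [Pi.add_apply, Pi.smul_apply, smul_eq_mul]
    generalize p.2 i = A
    generalize dotp ee p.1 = B
    generalize dotp w p.1 = C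
    generalize w i = D
    generalize (ee : U m) i = E
    fin_cases A <;> fin_cases B <;> fin_cases C <;> fin_cases D <;> fin_cases E <;> rfl

lemma gmap_dotp (w : U m) (p : U m × U m) :
    dotp (gmap w p).1 (gmap w p).2 = dotp p.1 p.2 := by
  rw [gmap_apply]
  simp only
  rw [dotp_add_right, dotp_add_right, dotp_smul_right, dotp_smul_right,
    dotp_comm p.1 ee, dotp_comm p.1 w]
  generalize dotp p.1 p.2 = A
  generalize dotp ee p.1 = B
  generalize dotp w p.1 = C
  fin_cases A <;> fin_cases B <;> fin_cases C <;> rfl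

noncomputable def GW (w : U m) : (U m × U m) ≃ₗ[ZMod 2] U m × U m :=
  LinearEquiv.ofLinear (gmap w) (gmap w)
    (LinearMap.ext fun p => gmap_gmap w p) (LinearMap.ext fun p => gmap_gmap w p)

lemma GW_apply (w : U m) (p : U m × U m) : GW w p = gmap w p := rfl

noncomputable def sw (σ : Fin m ≃ Fin m) : U m ≃ₗ[ZMod 2] U m :=
  LinearEquiv.funCongrLeft (ZMod 2) (ZMod 2) σ

lemma sw_apply (σ : Fin m ≃ Fin m) (u : U m) : sw σ u = u ∘ σ := rfl

lemma sw_dotp (σ : Fin m ≃ Fin m) (u v : U m) : dotp (sw σ u) (sw σ v) = dotp u v := by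
  rw [sw_apply, sw_apply, dotp, dotp]
  exact Equiv.sum_comp σ (fun i => u i * v i)

lemma zmod2_ne_zero (c : ZMod 2) (h : c ≠ 0) : c = 1 := by fin_cases c; exacts [absurd rfl h, rfl]

/-- Main lemma in the product world: the orthogonal group of the split form acts
transitively on vectors of `Q`-value one, sending `(b, a)` to `(ee, ee)`. -/
lemma main (hm : 0 < m) (a b : U m) (hab : dotp a b = 1) :
    ∃ B : (U m × U m) ≃ₗ[ZMod 2] U m × U m,
      (∀ p, dotp (B p).1 (B p).2 = dotp p.1 p.2) ∧ B (b, a) = (ee, ee) := by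
  have hb : ∃ j, b j = 1 := by
    by_contra h
    push_neg at h
    have hb0 : b = 0 := funext fun j => by
      by_contra h0
      exact h j (zmod2_ne_zero _ h0)
    rw [hb0] at hab
    simp [dotp] at hab
  obtain ⟨j, hj⟩ := hb
  set z : Fin m := ⟨0, hm⟩ with hz
  set σ : Fin m ≃ Fin m := Equiv.swap z j with hσ
  set b1 : U m := sw σ b with hb1
  set a1 : U m := sw σ a with ha1
  have hb1z : dotp ee b1 = 1 := by
    rw [dotp_ee_apply hm, hb1, sw_apply]
    simp [σ, Equiv.swap_apply_left, hj]
    rw [← hz, Equiv.swap_apply_left, hj]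
  have hab1 : dotp b1 a1 = dotp a b := by
    rw [hb1, ha1, sw_dotp, dotp_comm]
  set w : U m := b1 + ee with hw_def
  have hw : dotp ee w = 0 := by
    rw [hw_def, dotp_add_right, hb1z, dotp_ee_ee hm]
    decide
  set a2 : U m := hB w a1 with ha2
  have hstep1 : HW w hw (b1, a1) = (ee, a2) := by
    rw [HW_apply]
    simp only [ha2]
    congr 1
    rw [hA_apply, hb1z, one_smul, hw_def]
    ext i
    simp only [Pi.add_apply]
    generalize b1 i = A
    generalize (ee : U m) i = B
    fin_cases A <;> fin_cases B <;> rfl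
  have ha2z : dotp ee a2 = 1 := by
    have := hAB_dotp w hw b1 a1
    rw [hab1, hab] at this
    have h1 : hA w b1 = ee := by
      rw [hA_apply, hb1z, one_smul, hw_def]
      ext i
      simp only [Pi.add_apply]
      generalize b1 i = A
      generalize (ee : U m) i = B
      fin_cases A <;> fin_cases B <;> rfl
    rw [h1] at this
    exact this
  set w' : U m := a2 + ee with hw'_def
  have hw'ee : dotp w' ee = 0 := by
    rw [hw'_def, dotp_add_left, dotp_comm a2 ee, ha2z, dotp_ee_ee hm]
    decide
  have hstep2 : GW w' (ee, a2) = (ee, ee) := by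
    rw [GW_apply, gmap_apply]
    simp only
    congr 1
    rw [dotp_ee_ee hm, one_smul, hw'ee, zero_smul, add_zero, hw'_def]
    ext i
    simp only [Pi.add_apply]
    generalize a2 i = A
    generalize (ee : U m) i = B
    fin_cases A <;> fin_cases B <;> rfl
  refine ⟨((sw σ).prodCongr (sw σ)).trans ((HW w hw).trans (GW w')), ?_, ?_⟩
  · intro p
    simp only [LinearEquiv.trans_apply]
    rw [GW_apply, gmap_dotp]
    rw [show (HW w hw) ((sw σ).prodCongr (sw σ) p) = (hA w ((sw σ) p.1), hB w ((sw σ) p.2)) from rfl]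
    rw [hAB_dotp w hw, sw_dotp]
  · simp only [LinearEquiv.trans_apply]
    rw [show ((sw σ).prodCongr (sw σ)) (b, a) = (b1, a1) from rfl, hstep1, hstep2]

def Esplit (m : ℕ) : (Fin (2 * m) → ZMod 2) ≃ₗ[ZMod 2] (U m × U m) where
  toFun x := (fun k => x ⟨k.1, by have := k.isLt; omega⟩,
              fun k => x ⟨m + k.1, by have := k.isLt; omega⟩)
  invFun p := fun i => if h : i.1 < m then p.1 ⟨i.1, h⟩
                       else p.2 ⟨i.1 - m, by have := i.isLt; omega⟩
  map_add' x y := rfl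
  map_smul' c x := rfl
  left_inv x := by
    funext i
    by_cases h : i.1 < m
    · simp only [dif_pos h]
    · simp only [dif_neg h]
      congr 1
      ext
      simp
      omega
  right_inv p := by
    ext k
    · simp only
      rw [dif_pos k.isLt]
    · simp only
      rw [dif_neg (by omega)]
      have : (⟨m + k.1 - m, by have := k.isLt; omega⟩ : Fin m) = k := Fin.ext (by simp)
      rw [this]

lemma quadq_eq (x : Fin (2 * m) → ZMod 2) :
    quadq x = dotp (Esplit m x).1 (Esplit m x).2 := rfl

lemma dotp_split (x y : Fin (2 * m) → ZMod 2) :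
    dotp x y = dotp (Esplit m x).1 (Esplit m y).1 + dotp (Esplit m x).2 (Esplit m y).2 := by
  have h : m + m = 2 * m := (two_mul m).symm
  rw [dotp, ← Equiv.sum_comp (finCongr h) (fun i => x i * y i), Fin.sum_univ_add]
  rw [dotp, dotp]
  congr 1 <;> exact Finset.sum_congr rfl fun k _ => rfl

def e0 (m : ℕ) : Fin (2 * m) → ZMod 2 := fun i => if i.1 = 0 ∨ i.1 = m then 1 else 0

lemma e0_top : (Esplit m (e0 m)).1 = ee := by
  funext k
  simp only [Esplit, e0, ee, LinearEquiv.coe_mk]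
  have := k.isLt
  by_cases h : k.1 = 0 <;> simp [h, e0] <;> omega

lemma e0_bot : (Esplit m (e0 m)).2 = ee := by
  funext k
  simp only [Esplit, e0, ee, LinearEquiv.coe_mk]
  by_cases h : k.1 = 0 <;> simp [h, e0] <;> omega

end Quad14

open Quad14 in
/-- with `e⁽⁰⁾` the vector supported at coordinates `0` and `m`, for every
`c'` with `q c' = 1` there is an invertible linear map `B` with
`q (B x) + ⟨e⁽⁰⁾, B x⟩ = q x + ⟨c', x⟩` for all `x`. -/
theorem quadratic_linear_equiv_of_qc_one {m : ℕ} (hm : 1 ≤ m)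
    (c' : Fin (2 * m) → ZMod 2) (hc' : quadq c' = 1) :
    ∃ B : (Fin (2 * m) → ZMod 2) ≃ₗ[ZMod 2] (Fin (2 * m) → ZMod 2),
      ∀ x, quadq (B x) +
          dotp (fun i : Fin (2 * m) => if i.1 = 0 ∨ i.1 = m then 1 else 0) (B x) =
        quadq x + dotp c' x := by
  have hm0 : 0 < m := hm
  set a := (Esplit m c').1 with ha
  set b := (Esplit m c').2 with hb
  have hab : dotp a b = 1 := by rw [ha, hb, ← quadq_eq]; exact hc'
  obtain ⟨B, hQ, hBc⟩ := main hm0 a b hab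
  refine ⟨(Esplit m).trans (B.trans (Esplit m).symm), fun x => ?_⟩
  set y := B (Esplit m x) with hy
  have hE : Esplit m (((Esplit m).trans (B.trans (Esplit m).symm)) x) = y := by
    simp only [LinearEquiv.trans_apply, LinearEquiv.apply_symm_apply, hy]
  have he0 : (fun i : Fin (2 * m) => if i.1 = 0 ∨ i.1 = m then (1 : ZMod 2) else 0) = e0 m :=
    rfl
  rw [quadq_eq, hE, quadq_eq x, he0, dotp_split (e0 m), dotp_split c' x, hE,
    e0_top, e0_bot, ← ha, ← hb]
  have key := hQ ((Esplit m x).1 + b, (Esplit m x).2 + a)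
  have hpair : ((Esplit m x).1 + b, (Esplit m x).2 + a) = (Esplit m x) + (b, a) := rfl
  rw [hpair, map_add, hBc, ← hy] at key
  have h1 : (y + (ee, ee)).1 = y.1 + ee := rfl
  have h2 : (y + (ee, ee)).2 = y.2 + ee := rfl
  rw [h1, h2] at key
  simp only [Prod.fst_add, Prod.snd_add, dotp_add_left, dotp_add_right] at key
  rw [dotp_ee_ee hm0, dotp_comm y.1 ee, dotp_comm b a, hab,
    dotp_comm (Esplit m x).1 a] at key
  linear_combination key
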